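/- Let u solve the self-expander ODE with n ≥ 3, u(0) = C > 0, u'(0) = 0. If u' is bounded on [0,∞), then u'' has at most one zero on (0,∞), and u''(y) → 0 as y → ∞. -/

import Mathlib

open Set Filter Topology

/-- For a solution of the self-expander ODE with `n ≥ 3`, `u(0)=C>0`, `u'(0)=0`:
if `u'` is bounded on `[0,∞)`, then `u''` has at most one zero on `(0,∞)` and
`u''(y) → 0` as `y → ∞`. (Known facts: `u''(0) > 0`, `u' > 0` on `(0,∞)`, and
`u''' < 0` wherever `u'' = 0`.) -/
theorem selfexpander_second_deriv_at_most_one_zero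
    (n : ℕ) (hn : 3 ≤ n) (C : ℝ) (hC : 0 < C) (u u' u'' u''' : ℝ → ℝ)
    (hpos : ∀ y ∈ Ici (0:ℝ), 0 < u y)
    (hd1 : ∀ y ∈ Ici (0:ℝ), HasDerivWithinAt u (u' y) (Ici 0) y)
    (hd2 : ∀ y ∈ Ici (0:ℝ), HasDerivWithinAt u' (u'' y) (Ici 0) y)
    (hd3 : ∀ y ∈ Ici (0:ℝ), HasDerivWithinAt u'' (u''' y) (Ici 0) y)
    (hcont : ContinuousOn u'' (Ici 0))
    (hODE : ∀ y ∈ Ici (0:ℝ),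
      u'' y = (1 + (u' y)^2) * ((u y - u' y * y)/2 + ((n : ℝ) - 2) / u y))
    (hu0 : u 0 = C) (hu'0 : u' 0 = 0)
    (hu''0 : 0 < u'' 0)
    (hu'pos : ∀ y : ℝ, 0 < y → 0 < u' y)
    (hmax : ∀ y : ℝ, 0 < y → u'' y = 0 → u''' y < 0)
    (hbdd : ∃ M : ℝ, ∀ y ∈ Ici (0:ℝ), |u' y| ≤ M) :
    (∀ y₁ ∈ Ioi (0:ℝ), ∀ y₂ ∈ Ioi (0:ℝ), u'' y₁ = 0 → u'' y₂ = 0 → y₁ = y₂) ∧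
    Tendsto u'' atTop (𝓝 0) := by
  obtain ⟨M, hM⟩ := hbdd
  have hdAt1 : ∀ y : ℝ, 0 < y → HasDerivAt u (u' y) y := fun y hy =>
    (hd1 y hy.le).hasDerivAt (Ici_mem_nhds hy)
  have hdAt2 : ∀ y : ℝ, 0 < y → HasDerivAt u' (u'' y) y := fun y hy =>
    (hd2 y hy.le).hasDerivAt (Ici_mem_nhds hy)
  have hdAt3 : ∀ y : ℝ, 0 < y → HasDerivAt u'' (u''' y) y := fun y hy =>
    (hd3 y hy.le).hasDerivAt (Ici_mem_nhds hy)
  -- Claim A: once u'' hits zero at a > 0, it is negative forever after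
  have claimA : ∀ a : ℝ, 0 < a → u'' a = 0 → ∀ b : ℝ, a < b → u'' b < 0 := by
    intro a ha ha0 b hab
    by_contra hcon
    push_neg at hcon
    have hslope : Tendsto (slope u'' a) (𝓝[≠] a) (𝓝 (u''' a)) :=
      hasDerivAt_iff_tendsto_slope.mp (hdAt3 a ha)
    have h3a : u''' a < 0 := hmax a ha ha0
    have h1 : ∀ᶠ t in 𝓝[>] a, slope u'' a t < 0 :=
      (hslope.mono_left (nhdsWithin_mono _ fun t ht => LT.lt.ne' (show a < t from ht))).eventually_lt_const h3a
    obtain ⟨t, htIoo, hts⟩ :=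
      ((eventually_mem_set.2 (Ioo_mem_nhdsGT hab)).and h1).exists
    have hta : 0 < t - a := sub_pos.2 htIoo.1
    have htneg : u'' t < 0 := by
      have h2 := mul_neg_of_neg_of_pos hts hta
      rw [slope_def_field, ha0, sub_zero, div_mul_cancel₀ _ (ne_of_gt hta)] at h2
      exact h2
    have hta' : 0 < t := ha.trans htIoo.1
    have hKsub : Icc t b ⊆ Ici (0:ℝ) := fun s hs => hta'.le.trans hs.1
    have hcK : ContinuousOn u'' (Icc t b) := hcont.mono hKsub
    obtain ⟨z0, hz0m, hz00⟩ :=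
      intermediate_value_Icc htIoo.2.le hcK ⟨htneg.le, hcon⟩
    set K : Set ℝ := Icc t b ∩ u'' ⁻¹' {0} with hKdef
    have hKc : IsClosed K := hcK.preimage_isClosed_of_isClosed isClosed_Icc isClosed_singleton
    have hKcomp : IsCompact K := isCompact_Icc.of_isClosed_subset hKc inter_subset_left
    have hKne : K.Nonempty := ⟨z0, hz0m, hz00⟩
    set z := sInf K with hzdef
    have hzK : z ∈ K := hKcomp.sInf_mem hKne
    have hz0 : u'' z = 0 := hzK.2
    have hza' : t < z := lt_of_le_of_ne hzK.1.1 (by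
      intro h; rw [← h] at hz0; exact htneg.ne hz0)
    have hzpos : 0 < z := hta'.trans hza'
    have hneg : ∀ s, t ≤ s → s < z → u'' s < 0 := by
      intro s hs1 hs2
      have hsb : s ≤ b := hs2.le.trans hzK.1.2
      rcases lt_trichotomy (u'' s) 0 with h | h | h
      · exact h
      · exact absurd (csInf_le hKcomp.bddBelow ⟨⟨hs1, hsb⟩, h⟩) (not_le.2 hs2)
      · obtain ⟨s', hs', h0⟩ :=
          intermediate_value_Icc hs1 (hcK.mono (Icc_subset_Icc le_rfl hsb)) ⟨htneg.le, h.le⟩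
        have hzs : z ≤ s' := csInf_le hKcomp.bddBelow ⟨⟨hs'.1, hs'.2.trans hsb⟩, h0⟩
        exact absurd hs2 (not_lt.2 (hzs.trans hs'.2))
    have hslz : Tendsto (slope u'' z) (𝓝[<] z) (𝓝 (u''' z)) :=
      (hasDerivAt_iff_tendsto_slope.mp (hdAt3 z hzpos)).mono_left
        (nhdsWithin_mono _ fun s hs => LT.lt.ne (show s < z from hs))
    have hnonneg : 0 ≤ u''' z := by
      refine ge_of_tendsto hslz ?_
      filter_upwards [Ioo_mem_nhdsLT hza'] with s hs
      have hnum : u'' s < 0 := hneg s hs.1.le hs.2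
      have hden : s - z < 0 := sub_neg.2 hs.2
      rw [slope_def_field, hz0, sub_zero]
      exact (div_pos_of_neg_of_neg hnum hden).le
    exact absurd (hmax z hzpos hz0) (not_lt.2 hnonneg)
  have part1 : ∀ y₁ ∈ Ioi (0:ℝ), ∀ y₂ ∈ Ioi (0:ℝ), u'' y₁ = 0 → u'' y₂ = 0 → y₁ = y₂ := by
    intro y₁ h₁ y₂ h₂ e₁ e₂
    by_contra hne
    rcases Ne.lt_or_gt hne with h | h
    · exact (claimA y₁ h₁ e₁ y₂ h).ne e₂
    · exact (claimA y₂ h₂ e₂ y₁ h).ne e₁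
  refine ⟨part1, ?_⟩
  -- Part 2
  have contu : ContinuousOn u (Ici 0) := fun y hy => (hd1 y hy).continuousWithinAt
  have contu' : ContinuousOn u' (Ici 0) := fun y hy => (hd2 y hy).continuousWithinAt
  have hM0 : 0 ≤ M := le_trans (abs_nonneg _) (hM 0 (le_refl (0:ℝ)))
  have hu'nn : ∀ y ∈ Ici (0:ℝ), 0 ≤ u' y := by
    intro y hy
    rcases eq_or_lt_of_le (mem_Ici.mp hy) with h | h
    · rw [← h, hu'0]
    · exact (hu'pos y h).le
  have umono : MonotoneOn u (Ici 0) := by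
    apply monotoneOn_of_deriv_nonneg (convex_Ici 0) contu
    · intro x hx; rw [interior_Ici] at hx
      exact (hdAt1 x hx).differentiableAt.differentiableWithinAt
    · intro x hx; rw [interior_Ici] at hx
      rw [(hdAt1 x hx).deriv]; exact (hu'pos x hx).le
  have huC : ∀ y ∈ Ici (0:ℝ), C ≤ u y := fun y hy => hu0 ▸ umono self_mem_Ici hy hy
  have hn2 : (0:ℝ) < (n:ℝ) - 2 := by
    have : (3:ℝ) ≤ (n:ℝ) := by exact_mod_cast hn
    linarith
  -- limit of (n-2)/u
  obtain ⟨r, hrk⟩ : ∃ r, Tendsto (fun y => ((n:ℝ)-2)/u y) atTop (𝓝 r) := by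
    have hvU : Monotone (fun y => u (max y 0)) := fun y₁ y₂ h =>
      umono (mem_Ici.mpr (le_max_right _ _)) (mem_Ici.mpr (le_max_right _ _)) (max_le_max h le_rfl)
    have hveq : (fun y => u (max y 0)) =ᶠ[atTop] u := by
      filter_upwards [eventually_ge_atTop (0:ℝ)] with y hy
      rw [max_eq_left hy]
    rcases tendsto_of_monotone hvU with hTop | ⟨U, hU⟩
    · exact ⟨0, tendsto_const_nhds.div_atTop (hTop.congr' hveq)⟩
    · have hU' : Tendsto u atTop (𝓝 U) := hU.congr' hveq
      have hUC : C ≤ U := ge_of_tendsto hU'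
        (by filter_upwards [eventually_ge_atTop (0:ℝ)] with y hy; exact huC y (mem_Ici.mpr hy))
      exact ⟨((n:ℝ)-2)/U, tendsto_const_nhds.div hU' (ne_of_gt (lt_of_lt_of_le hC hUC))⟩
  -- the auxiliary function w
  set w : ℝ → ℝ := fun y => u y - y * u' y with hwdef
  have hdw : ∀ y : ℝ, 0 < y → HasDerivAt w (-(y * u'' y)) y := by
    intro y hy
    have h2 := (hdAt1 y hy).sub ((hasDerivAt_id y).mul (hdAt2 y hy))
    exact h2.congr_deriv (by simp only [id_eq, one_mul]; ring)
  have contw : ContinuousOn w (Ici 0) := contu.sub (continuous_id.continuousOn.mul contu')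
  have hODE' : ∀ y ∈ Ici (0:ℝ), u'' y = (1 + (u' y)^2) * (w y / 2 + ((n:ℝ)-2)/u y) := by
    intro y hy
    rw [hODE y hy, hwdef]
    ring
  clear hwdef
  clear_value w
  -- monotone convergence helpers
  have tends_mono : ∀ (f : ℝ → ℝ) (a : ℝ), MonotoneOn f (Ici a) →
      (∃ B, ∀ y ∈ Ici a, f y ≤ B) → ∃ l, Tendsto f atTop (𝓝 l) := by
    rintro f a hf ⟨B, hB⟩
    have hv : Monotone (fun y => f (max y a)) := fun y₁ y₂ h =>
      hf (mem_Ici.mpr (le_max_right _ _)) (mem_Ici.mpr (le_max_right _ _)) (max_le_max h le_rfl)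
    have hveq : (fun y => f (max y a)) =ᶠ[atTop] f := by
      filter_upwards [eventually_ge_atTop a] with y hy
      rw [max_eq_left hy]
    rcases tendsto_of_monotone hv with hTop | ⟨l, hl⟩
    · exfalso
      obtain ⟨y, hy⟩ := (hTop.eventually (eventually_gt_atTop B)).exists
      exact absurd (hB _ (mem_Ici.mpr (le_max_right _ _))) (not_le.2 hy)
    · exact ⟨l, hl.congr' hveq⟩
  have tends_anti : ∀ (f : ℝ → ℝ) (a : ℝ), AntitoneOn f (Ici a) →
      (∃ B, ∀ y ∈ Ici a, B ≤ f y) → ∃ l, Tendsto f atTop (𝓝 l) := by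
    rintro f a hf ⟨B, hB⟩
    obtain ⟨l, hl⟩ := tends_mono (fun y => -f y) a
      (fun y₁ h₁ y₂ h₂ h => neg_le_neg (hf h₁ h₂ h))
      ⟨-B, fun y hy => neg_le_neg (hB y hy)⟩
    exact ⟨-l, by simpa using hl.neg⟩
  -- key: u' and w both converge
  have key : ∃ L W : ℝ, Tendsto u' atTop (𝓝 L) ∧ Tendsto w atTop (𝓝 W) := by
    by_cases hA : ∀ y : ℝ, 0 < y → 0 < u'' y
    · have hApos : ∀ y ∈ Ici (0:ℝ), 0 < u'' y := by
        intro y hy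
        rcases eq_or_lt_of_le (mem_Ici.mp hy) with h | h
        · rw [← h]; exact hu''0
        · exact hA y h
      have hmono' : MonotoneOn u' (Ici 0) := by
        apply monotoneOn_of_deriv_nonneg (convex_Ici 0) contu'
        · intro x hx; rw [interior_Ici] at hx
          exact (hdAt2 x hx).differentiableAt.differentiableWithinAt
        · intro x hx; rw [interior_Ici] at hx
          rw [(hdAt2 x hx).deriv]; exact (hA x hx).le
      obtain ⟨L, hL⟩ := tends_mono u' 0 hmono' ⟨M, fun y hy => (abs_le.1 (hM y hy)).2⟩
      have hwanti : AntitoneOn w (Ici 0) := by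
        apply antitoneOn_of_deriv_nonpos (convex_Ici 0) contw
        · intro x hx; rw [interior_Ici] at hx
          exact (hdw x hx).differentiableAt.differentiableWithinAt
        · intro x hx; rw [interior_Ici] at hx
          rw [(hdw x hx).deriv]
          exact neg_nonpos.2 (mul_nonneg hx.le (hA x hx).le)
      have hwlb : ∀ y ∈ Ici (0:ℝ), -(2*(((n:ℝ)-2)/C)) ≤ w y := by
        intro y hy
        have h2 := hODE' y hy
        have hE : 0 < w y / 2 + ((n:ℝ)-2)/u y := by
          by_contra hE
          push_neg at hE
          have h3 : u'' y ≤ 0 := by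
            rw [h2]
            exact mul_nonpos_of_nonneg_of_nonpos (by positivity) hE
          exact absurd (hApos y hy) (not_lt.2 h3)
        have hdivle : ((n:ℝ)-2)/u y ≤ ((n:ℝ)-2)/C :=
          div_le_div_of_nonneg_left hn2.le hC (huC y hy)
        linarith
      obtain ⟨W, hW⟩ := tends_anti w 0 hwanti ⟨-(2*(((n:ℝ)-2)/C)), hwlb⟩
      exact ⟨L, W, hL, hW⟩
    · push_neg at hA
      obtain ⟨y₀, hy₀, hy₀'⟩ := hA
      obtain ⟨a, haIcc, ha0⟩ :=
        intermediate_value_Icc' hy₀.le (hcont.mono Icc_subset_Ici_self) ⟨hy₀', hu''0.le⟩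
      have hapos : 0 < a := by
        rcases eq_or_lt_of_le haIcc.1 with h | h
        · exfalso; rw [← h] at ha0; exact hu''0.ne' ha0
        · exact h
      have hneg : ∀ y, a < y → u'' y < 0 := claimA a hapos ha0
      have hnegle : ∀ y, a ≤ y → u'' y ≤ 0 := by
        intro y hy
        rcases eq_or_lt_of_le hy with h | h
        · rw [← h, ha0]
        · exact (hneg y h).le
      have hanti' : AntitoneOn u' (Ici a) := by
        apply antitoneOn_of_deriv_nonpos (convex_Ici a) (contu'.mono (Ici_subset_Ici.mpr hapos.le))
        · intro x hx; rw [interior_Ici] at hx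
          exact (hdAt2 x (hapos.trans hx)).differentiableAt.differentiableWithinAt
        · intro x hx; rw [interior_Ici] at hx
          rw [(hdAt2 x (hapos.trans hx)).deriv]; exact (hneg x hx).le
      obtain ⟨L, hL⟩ := tends_anti u' a hanti'
        ⟨0, fun y hy => hu'nn y (mem_Ici.mpr (hapos.le.trans (mem_Ici.mp hy)))⟩
      have hwm : MonotoneOn w (Ici a) := by
        apply monotoneOn_of_deriv_nonneg (convex_Ici a) (contw.mono (Ici_subset_Ici.mpr hapos.le))
        · intro x hx; rw [interior_Ici] at hx
          exact (hdw x (hapos.trans hx)).differentiableAt.differentiableWithinAt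
        · intro x hx; rw [interior_Ici] at hx
          rw [(hdw x (hapos.trans hx)).deriv]
          exact neg_nonneg.2 (mul_nonpos_of_nonneg_of_nonpos (hapos.trans hx).le (hneg x hx).le)
      have wub : ∀ y ∈ Ici a, w y ≤ 0 := by
        intro y hy
        have hy0 : (0:ℝ) ≤ y := hapos.le.trans hy
        have hE : w y / 2 + ((n:ℝ)-2)/u y ≤ 0 := by
          by_contra hE
          push_neg at hE
          have h3 : 0 < u'' y := by
            rw [hODE' y hy0]
            exact mul_pos (by positivity) hE
          exact absurd (hnegle y hy) (not_le.2 h3)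
        have h4 : 0 < ((n:ℝ)-2)/u y := div_pos hn2 (hpos y hy0)
        linarith
      obtain ⟨W, hW⟩ := tends_mono w a hwm ⟨0, wub⟩
      exact ⟨L, W, hL, hW⟩
  obtain ⟨L, W, hL, hW⟩ := key
  have hc : Tendsto u'' atTop (𝓝 ((1 + L^2) * (W/2 + r))) := by
    have h5 : Tendsto (fun y => (1 + (u' y)^2) * (w y / 2 + ((n:ℝ)-2)/u y)) atTop
        (𝓝 ((1 + L^2) * (W/2 + r))) :=
      (tendsto_const_nhds.add (hL.pow 2)).mul ((hW.div_const 2).add hrk)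
    apply h5.congr'
    filter_upwards [eventually_ge_atTop (0:ℝ)] with y hy
    exact (hODE' y hy).symm
  obtain ⟨c, hc⟩ : ∃ c, Tendsto u'' atTop (𝓝 c) := ⟨_, hc⟩
  have hc0 : c = 0 := by
    by_contra hne
    rcases lt_or_gt_of_ne hne with hlt | hgt
    · -- c < 0
      obtain ⟨y₀, h₀⟩ := eventually_atTop.1
        ((hc.eventually_le_const (show c < c/2 by linarith)).and (eventually_ge_atTop (0:ℝ)))
      have hy₀0 : 0 ≤ y₀ := (h₀ y₀ le_rfl).2
      have hanti : AntitoneOn (fun y => u' y - c/2 * y) (Ici y₀) := by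
        apply antitoneOn_of_deriv_nonpos (convex_Ici y₀)
        · exact (contu'.mono (Ici_subset_Ici.2 hy₀0)).sub (by fun_prop)
        · intro x hx; rw [interior_Ici] at hx
          have hx0 : 0 < x := lt_of_le_of_lt hy₀0 hx
          exact ((hdAt2 x hx0).sub
            ((hasDerivAt_id x).const_mul (c/2))).differentiableAt.differentiableWithinAt
        · intro x hx; rw [interior_Ici] at hx
          have hx0 : 0 < x := lt_of_le_of_lt hy₀0 (mem_Ioi.mp hx)
          have hg : HasDerivAt (fun y => u' y - c/2 * y) (u'' x - c/2 * 1) x :=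
            (hdAt2 x hx0).sub ((hasDerivAt_id x).const_mul (c/2))
          rw [hg.deriv]
          have h6 := (h₀ x (le_of_lt (mem_Ioi.mp hx))).1
          simp only [mul_one]
          linarith
      obtain ⟨Y, hYdef⟩ : ∃ Y : ℝ, Y = y₀ + (2*(2*M+1))/(-c) := ⟨_, rfl⟩
      have hYge : y₀ ≤ Y := by
        have h7 : 0 < (2*(2*M+1))/(-c) := by
          apply div_pos (by linarith) (by linarith)
        rw [hYdef]; linarith
      have h1 : u' Y - c/2 * Y ≤ u' y₀ - c/2 * y₀ :=
        hanti self_mem_Ici hYge hYge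
      have hkey : c/2 * (Y - y₀) = -(2*M+1) := by
        have hcne : c ≠ 0 := ne_of_lt hlt
        rw [hYdef]
        field_simp
        ring
      have hexp : c/2 * Y - c/2 * y₀ = c/2 * (Y - y₀) := by ring
      have hb1 := (abs_le.1 (hM Y (mem_Ici.mpr (le_trans hy₀0 hYge)))).1
      have hb2 := (abs_le.1 (hM y₀ (mem_Ici.mpr hy₀0))).2
      linarith
    · -- c > 0
      obtain ⟨y₀, h₀⟩ := eventually_atTop.1
        ((hc.eventually_const_le (show c/2 < c by linarith)).and (eventually_ge_atTop (0:ℝ)))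
      have hy₀0 : 0 ≤ y₀ := (h₀ y₀ le_rfl).2
      have hmono : MonotoneOn (fun y => u' y - c/2 * y) (Ici y₀) := by
        apply monotoneOn_of_deriv_nonneg (convex_Ici y₀)
        · exact (contu'.mono (Ici_subset_Ici.2 hy₀0)).sub (by fun_prop)
        · intro x hx; rw [interior_Ici] at hx
          have hx0 : 0 < x := lt_of_le_of_lt hy₀0 hx
          exact ((hdAt2 x hx0).sub
            ((hasDerivAt_id x).const_mul (c/2))).differentiableAt.differentiableWithinAt
        · intro x hx; rw [interior_Ici] at hx
          have hx0 : 0 < x := lt_of_le_of_lt hy₀0 (mem_Ioi.mp hx)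
          have hg : HasDerivAt (fun y => u' y - c/2 * y) (u'' x - c/2 * 1) x :=
            (hdAt2 x hx0).sub ((hasDerivAt_id x).const_mul (c/2))
          rw [hg.deriv]
          have h6 := (h₀ x (le_of_lt (mem_Ioi.mp hx))).1
          simp only [mul_one]
          linarith
      obtain ⟨Y, hYdef⟩ : ∃ Y : ℝ, Y = y₀ + (2*(2*M+1))/c := ⟨_, rfl⟩
      have hYge : y₀ ≤ Y := by
        have h7 : 0 < (2*(2*M+1))/c := by
          apply div_pos (by linarith) hgt
        rw [hYdef]; linarith
      have h1 : u' y₀ - c/2 * y₀ ≤ u' Y - c/2 * Y :=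
        hmono self_mem_Ici hYge hYge
      have hkey : c/2 * (Y - y₀) = 2*M+1 := by
        have hcne : c ≠ 0 := ne_of_gt hgt
        rw [hYdef]
        field_simp
        ring
      have hexp : c/2 * Y - c/2 * y₀ = c/2 * (Y - y₀) := by ring
      have hb1 := (abs_le.1 (hM Y (mem_Ici.mpr (le_trans hy₀0 hYge)))).2
      have hb2 := (abs_le.1 (hM y₀ (mem_Ici.mpr hy₀0))).1
      linarith
  rw [hc0] at hc
  exact hc
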